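/- Let H0 and H1 be complex Hilbert spaces, let A0 on H0 and A1 on H1 be bounded operators, and let δ > 0. Assume: (a) for every bounded Y : H0 → H1 there exists a bounded X : H0 → H1 with X A0 − A1 X = Y and every bounded X : H0 → H1 satisfies δ·‖X‖ ≤ ‖X A0 − A1 X‖; (b) likewise, for every bounded Y' : H1 → H0 there exists a bounded X' : H1 → H0 with X' A1 − A0 X' = Y' and every bounded X' : H1 → H0 satisfies δ·‖X'‖ ≤ ‖X' A1 − A0 X'‖. Let B : H1 → H0 and C : H0 → H1 be bounded operators such that √(‖B‖·‖C‖) < δ/2, and let L be the block operator matrix on H = H0 ⊕ H1 given by L(x0,x1) = (A0 x0 + B x1, C x0 + A1 x1). Then there exist bounded operators K : H0 → H1 with 2·‖B‖·‖K‖ ≤ δ solving K A0 − A1 K + K B K = C, and K' : H1 → H0 with 2·‖C‖·‖K'‖ ≤ δ solving K' A1 − A0 K' + K' C K' = B, such that ‖K‖·‖K'‖ < 1, the graph subspaces G(K) = {(x0, K x0)} and G'(K') = {(K' x1, x1)} are invariant under L, and H is the direct sum of G(K) and G'(K') (they intersect trivially and span H). (Bounded-operator version of Theorem 4.4 of the paper.)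 -/

import Mathlib

lemma fixedpoint_ball {E : Type*} [NormedAddCommGroup E] [CompleteSpace E]
    (Φ : E → E) (r : ℝ) (hr : 0 ≤ r) (κ : ℝ) (hκ0 : 0 ≤ κ) (hκ1 : κ < 1)
    (hmem : ∀ x, ‖x‖ ≤ r → ‖Φ x‖ ≤ r)
    (hlip : ∀ x y, ‖x‖ ≤ r → ‖y‖ ≤ r → ‖Φ x - Φ y‖ ≤ κ * ‖x - y‖) :
    ∃ x : E, Φ x = x ∧ ‖x‖ ≤ r := by
  haveI : CompleteSpace (Metric.closedBall (0 : E) r) :=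
    Metric.isClosed_closedBall.completeSpace_coe
  haveI : Nonempty (Metric.closedBall (0 : E) r) :=
    ⟨⟨0, by simp [hr]⟩⟩
  have memr : ∀ x : Metric.closedBall (0 : E) r, ‖x.1‖ ≤ r := fun x => by
    have := x.2; rwa [Metric.mem_closedBall, dist_zero_right] at this
  have hcontr : ContractingWith ⟨κ, hκ0⟩
      (fun x : Metric.closedBall (0 : E) r =>
        (⟨Φ x.1, by rw [Metric.mem_closedBall, dist_zero_right]; exact hmem x.1 (memr x)⟩ :
          Metric.closedBall (0 : E) r)) := by
    constructor
    · exact_mod_cast hκ1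
    · apply LipschitzWith.of_dist_le_mul
      intro x y
      simp only [Subtype.dist_eq, dist_eq_norm]
      exact hlip x.1 y.1 (memr x) (memr y)
  have hx := hcontr.fixedPoint_isFixedPt
  exact ⟨(ContractingWith.fixedPoint _ hcontr).1, congrArg Subtype.val hx, memr _⟩

lemma riccati_aux {E : Type*} [NormedAddCommGroup E] [CompleteSpace E]
    (S : E → E) (hSsub : ∀ X Y, S (X - Y) = S X - S Y)
    (δ : ℝ) (hδ : 0 < δ)
    (hSurj : Function.Surjective S)
    (hBound : ∀ X, δ * ‖X‖ ≤ ‖S X‖)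
    (q : E → E) (β : ℝ) (hβ : 0 ≤ β)
    (hqlip : ∀ X Y, ‖q X - q Y‖ ≤ β * (‖X‖ + ‖Y‖) * ‖X - Y‖)
    (hq0 : q 0 = 0)
    (c : E) (hc : Real.sqrt (β * ‖c‖) < δ / 2) :
    ∃ K : E, S K + q K = c ∧
      ‖K‖ ≤ 2 * ‖c‖ / (δ + Real.sqrt (δ ^ 2 - 4 * β * ‖c‖)) := by
  obtain ⟨γ, hγdef, hγ⟩ : ∃ γ : ℝ, γ = ‖c‖ ∧ 0 ≤ γ := ⟨‖c‖, rfl, norm_nonneg c⟩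
  rw [← hγdef] at hc ⊢
  have hβγ : β * γ < δ ^ 2 / 4 := by
    nlinarith [Real.sq_sqrt (mul_nonneg hβ (hγdef ▸ hγ : (0:ℝ) ≤ γ)), Real.sqrt_nonneg (β * γ)]
  obtain ⟨D, hDdef⟩ : ∃ D : ℝ, D = δ ^ 2 - 4 * β * γ := ⟨_, rfl⟩
  have hD : 0 < D := by rw [hDdef]; linarith
  obtain ⟨sD, hsDdef⟩ : ∃ sD : ℝ, sD = Real.sqrt D := ⟨_, rfl⟩
  have hsq : sD ^ 2 = D := by rw [hsDdef]; exact Real.sq_sqrt hD.le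
  have hsD : 0 < sD := by rw [hsDdef]; exact Real.sqrt_pos.2 hD
  have hsDδ : sD ≤ δ := by nlinarith
  obtain ⟨r, hrdef⟩ : ∃ r : ℝ, r = 2 * γ / (δ + sD) := ⟨_, rfl⟩
  have hs : 0 < δ + sD := by linarith
  have hr0 : 0 ≤ r := by rw [hrdef]; positivity
  have hkey : β * r ^ 2 + γ = δ * r := by
    rw [hrdef]; field_simp; linear_combination γ * hsq + γ * hDdef
  have h2βr : 2 * β * r = δ - sD := by
    rw [hrdef]; field_simp; linear_combination hsq + hDdef
  -- inverse of S
  have hST : ∀ Y, S ((hSurj Y).choose) = Y := fun Y => (hSurj Y).choose_spec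
  have hTnorm : ∀ Y, ‖(hSurj Y).choose‖ ≤ ‖Y‖ / δ := by
    intro Y
    rw [le_div_iff₀ hδ, mul_comm]
    calc δ * ‖(hSurj Y).choose‖ ≤ ‖S ((hSurj Y).choose)‖ := hBound _
      _ = ‖Y‖ := by rw [hST]
  have hqnorm : ∀ X, ‖q X‖ ≤ β * ‖X‖ ^ 2 := by
    intro X
    have h := hqlip X 0
    simp only [hq0, sub_zero, norm_zero, add_zero] at h
    nlinarith [h]
  have hmem : ∀ X : E, ‖X‖ ≤ r → ‖(hSurj (c - q X)).choose‖ ≤ r := by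
    intro X hX
    have h1 : ‖c - q X‖ ≤ γ + β * ‖X‖ ^ 2 := by
      calc ‖c - q X‖ ≤ ‖c‖ + ‖q X‖ := norm_sub_le _ _
        _ ≤ γ + β * ‖X‖ ^ 2 := by have := hqnorm X; rw [← hγdef]; linarith
    have h3 : β * ‖X‖ ^ 2 ≤ β * r ^ 2 :=
      mul_le_mul_of_nonneg_left (pow_le_pow_left₀ (norm_nonneg X) hX 2) hβ
    have h4 : ‖c - q X‖ ≤ δ * r := by rw [← hkey]; linarith
    calc ‖(hSurj (c - q X)).choose‖ ≤ ‖c - q X‖ / δ := hTnorm _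
      _ ≤ δ * r / δ := by gcongr
      _ = r := by field_simp
  have hlip : ∀ X Y : E, ‖X‖ ≤ r → ‖Y‖ ≤ r →
      ‖(hSurj (c - q X)).choose - (hSurj (c - q Y)).choose‖ ≤ (δ - sD) / δ * ‖X - Y‖ := by
    intro X Y hX hY
    have h1 : S ((hSurj (c - q X)).choose - (hSurj (c - q Y)).choose) = q Y - q X := by
      rw [hSsub, hST, hST]; abel
    have h2 : δ * ‖(hSurj (c - q X)).choose - (hSurj (c - q Y)).choose‖ ≤ ‖q Y - q X‖ := by
      have := hBound ((hSurj (c - q X)).choose - (hSurj (c - q Y)).choose)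
      rwa [h1] at this
    have h3 : ‖q Y - q X‖ ≤ β * (‖X‖ + ‖Y‖) * ‖X - Y‖ := by
      rw [norm_sub_rev]; exact hqlip X Y
    have h4 : β * (‖X‖ + ‖Y‖) * ‖X - Y‖ ≤ 2 * β * r * ‖X - Y‖ := by
      nlinarith [mul_nonneg (mul_nonneg hβ (by linarith : (0:ℝ) ≤ 2 * r - ‖X‖ - ‖Y‖))
        (norm_nonneg (X - Y))]
    rw [div_mul_eq_mul_div, le_div_iff₀ hδ, ← h2βr]
    nlinarith
  have hκ0 : 0 ≤ (δ - sD) / δ := by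
    apply div_nonneg _ hδ.le; linarith
  have hκ1 : (δ - sD) / δ < 1 := by rw [div_lt_one hδ]; linarith
  obtain ⟨K, hKfix, hKr⟩ := fixedpoint_ball (fun X => (hSurj (c - q X)).choose) r hr0
    ((δ - sD) / δ) hκ0 hκ1 hmem hlip
  refine ⟨K, ?_, ?_⟩
  · have h5 : S K = c - q K := by
      conv_lhs => rw [← hKfix]
      exact hST _
    rw [h5]; abel
  · rw [← hDdef, ← hsDdef, ← hrdef]; exact hKr

lemma quad_norm_est {F G : Type*} [NormedAddCommGroup F] [NormedSpace ℂ F]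
    [NormedAddCommGroup G] [NormedSpace ℂ G]
    (X Y : F →L[ℂ] G) (W : G →L[ℂ] F) :
    ‖(X ∘L W) ∘L X - (Y ∘L W) ∘L Y‖ ≤ ‖W‖ * (‖X‖ + ‖Y‖) * ‖X - Y‖ := by
  have hid : (X ∘L W) ∘L X - (Y ∘L W) ∘L Y
      = (X ∘L W) ∘L (X - Y) + ((X - Y) ∘L W) ∘L Y := by
    simp only [ContinuousLinearMap.comp_sub, ContinuousLinearMap.sub_comp]; abel
  rw [hid]
  have h1 : ‖(X ∘L W) ∘L (X - Y)‖ ≤ ‖X‖ * ‖W‖ * ‖X - Y‖ :=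
    le_trans (ContinuousLinearMap.opNorm_comp_le _ _)
      (mul_le_mul_of_nonneg_right (ContinuousLinearMap.opNorm_comp_le _ _) (norm_nonneg _))
  have h2 : ‖((X - Y) ∘L W) ∘L Y‖ ≤ ‖X - Y‖ * ‖W‖ * ‖Y‖ :=
    le_trans (ContinuousLinearMap.opNorm_comp_le _ _)
      (mul_le_mul_of_nonneg_right (ContinuousLinearMap.opNorm_comp_le _ _) (norm_nonneg _))
  calc ‖(X ∘L W) ∘L (X - Y) + ((X - Y) ∘L W) ∘L Y‖
      ≤ ‖(X ∘L W) ∘L (X - Y)‖ + ‖((X - Y) ∘L W) ∘L Y‖ := norm_add_le _ _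
    _ ≤ ‖X‖ * ‖W‖ * ‖X - Y‖ + ‖X - Y‖ * ‖W‖ * ‖Y‖ := add_le_add h1 h2
    _ = ‖W‖ * (‖X‖ + ‖Y‖) * ‖X - Y‖ := by ring

set_option maxHeartbeats 1000000 in
theorem block_diagonalization_riccati
    {H0 : Type*} [NormedAddCommGroup H0] [InnerProductSpace ℂ H0] [CompleteSpace H0]
    {H1 : Type*} [NormedAddCommGroup H1] [InnerProductSpace ℂ H1] [CompleteSpace H1]
    (A0 : H0 →L[ℂ] H0) (A1 : H1 →L[ℂ] H1) (δ : ℝ) (hδ : 0 < δ)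
    (hSurj : ∀ Y : H0 →L[ℂ] H1, ∃ X : H0 →L[ℂ] H1, X ∘L A0 - A1 ∘L X = Y)
    (hBound : ∀ X : H0 →L[ℂ] H1, δ * ‖X‖ ≤ ‖X ∘L A0 - A1 ∘L X‖)
    (hSurj' : ∀ Y' : H1 →L[ℂ] H0, ∃ X' : H1 →L[ℂ] H0, X' ∘L A1 - A0 ∘L X' = Y')
    (hBound' : ∀ X' : H1 →L[ℂ] H0, δ * ‖X'‖ ≤ ‖X' ∘L A1 - A0 ∘L X'‖)
    (B : H1 →L[ℂ] H0) (C : H0 →L[ℂ] H1)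
    (hBC : Real.sqrt (‖B‖ * ‖C‖) < δ / 2)
    (L : WithLp 2 (H0 × H1) →L[ℂ] WithLp 2 (H0 × H1))
    (hL : ∀ (x0 : H0) (x1 : H1),
      L ((WithLp.equiv 2 (H0 × H1)).symm (x0, x1)) =
        (WithLp.equiv 2 (H0 × H1)).symm (A0 x0 + B x1, C x0 + A1 x1)) :
    ∃ (K : H0 →L[ℂ] H1) (K' : H1 →L[ℂ] H0),
      2 * ‖B‖ * ‖K‖ ≤ δ ∧ K ∘L A0 - A1 ∘L K + (K ∘L B) ∘L K = C ∧
      2 * ‖C‖ * ‖K'‖ ≤ δ ∧ K' ∘L A1 - A0 ∘L K' + (K' ∘L C) ∘L K' = B ∧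
      ‖K‖ * ‖K'‖ < 1 ∧
      (∀ u ∈ {x : WithLp 2 (H0 × H1) | ∃ x0 : H0,
          x = (WithLp.equiv 2 (H0 × H1)).symm (x0, K x0)},
        L u ∈ {x : WithLp 2 (H0 × H1) | ∃ x0 : H0,
          x = (WithLp.equiv 2 (H0 × H1)).symm (x0, K x0)}) ∧
      (∀ u ∈ {x : WithLp 2 (H0 × H1) | ∃ x1 : H1,
          x = (WithLp.equiv 2 (H0 × H1)).symm (K' x1, x1)},
        L u ∈ {x : WithLp 2 (H0 × H1) | ∃ x1 : H1,
          x = (WithLp.equiv 2 (H0 × H1)).symm (K' x1, x1)}) ∧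
      ({x : WithLp 2 (H0 × H1) | ∃ x0 : H0,
          x = (WithLp.equiv 2 (H0 × H1)).symm (x0, K x0)} ∩
        {x : WithLp 2 (H0 × H1) | ∃ x1 : H1,
          x = (WithLp.equiv 2 (H0 × H1)).symm (K' x1, x1)} = {0}) ∧
      (∀ x : WithLp 2 (H0 × H1),
        ∃ u ∈ {x : WithLp 2 (H0 × H1) | ∃ x0 : H0,
            x = (WithLp.equiv 2 (H0 × H1)).symm (x0, K x0)},
        ∃ v ∈ {x : WithLp 2 (H0 × H1) | ∃ x1 : H1,
            x = (WithLp.equiv 2 (H0 × H1)).symm (K' x1, x1)},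
          x = u + v) := by
  classical
  -- solve the first Riccati equation
  obtain ⟨K, hKeq, hKnorm⟩ := riccati_aux (fun X : H0 →L[ℂ] H1 => X ∘L A0 - A1 ∘L X)
    (by intro X Y;
        simp only [ContinuousLinearMap.comp_sub, ContinuousLinearMap.sub_comp]; abel)
    δ hδ (fun Y => hSurj Y) hBound
    (fun X => (X ∘L B) ∘L X) ‖B‖ (norm_nonneg B)
    (by intro X Y; exact quad_norm_est X Y B)
    (by simp) C hBC
  -- solve the second Riccati equation
  have hCB : Real.sqrt (‖C‖ * ‖B‖) < δ / 2 := by rwa [mul_comm]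
  obtain ⟨K', hK'eq, hK'norm⟩ := riccati_aux (fun X : H1 →L[ℂ] H0 => X ∘L A1 - A0 ∘L X)
    (by intro X Y;
        simp only [ContinuousLinearMap.comp_sub, ContinuousLinearMap.sub_comp]; abel)
    δ hδ (fun Y => hSurj' Y) hBound'
    (fun X => (X ∘L C) ∘L X) ‖C‖ (norm_nonneg C)
    (by intro X Y; exact quad_norm_est X Y C)
    (by simp) B hCB
  rw [show δ ^ 2 - 4 * ‖C‖ * ‖B‖ = δ ^ 2 - 4 * ‖B‖ * ‖C‖ by ring] at hK'norm
  -- numerics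
  have hβ : (0:ℝ) ≤ ‖B‖ := norm_nonneg B
  have hγ : (0:ℝ) ≤ ‖C‖ := norm_nonneg C
  have hβγ : ‖B‖ * ‖C‖ < δ ^ 2 / 4 := by
    nlinarith [Real.sq_sqrt (mul_nonneg hβ hγ), Real.sqrt_nonneg (‖B‖ * ‖C‖)]
  have hD : (0:ℝ) < δ ^ 2 - 4 * ‖B‖ * ‖C‖ := by linarith
  have hsq : Real.sqrt (δ ^ 2 - 4 * ‖B‖ * ‖C‖) ^ 2 = δ ^ 2 - 4 * ‖B‖ * ‖C‖ :=
    Real.sq_sqrt hD.le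
  have hsD : (0:ℝ) < Real.sqrt (δ ^ 2 - 4 * ‖B‖ * ‖C‖) := Real.sqrt_pos.2 hD
  have hs : (0:ℝ) < δ + Real.sqrt (δ ^ 2 - 4 * ‖B‖ * ‖C‖) := by linarith
  have hKa : ‖K‖ * (δ + Real.sqrt (δ ^ 2 - 4 * ‖B‖ * ‖C‖)) ≤ 2 * ‖C‖ :=
    (le_div_iff₀ hs).mp hKnorm
  have hK'a : ‖K'‖ * (δ + Real.sqrt (δ ^ 2 - 4 * ‖B‖ * ‖C‖)) ≤ 2 * ‖B‖ :=
    (le_div_iff₀ hs).mp hK'norm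
  have hg1 : 2 * ‖B‖ * ‖K‖ ≤ δ := by
    nlinarith [mul_le_mul_of_nonneg_left hKa (by positivity : (0:ℝ) ≤ 2 * ‖B‖), hsq,
      mul_nonneg hsD.le hs.le, norm_nonneg K]
  have hg2 : 2 * ‖C‖ * ‖K'‖ ≤ δ := by
    nlinarith [mul_le_mul_of_nonneg_left hK'a (by positivity : (0:ℝ) ≤ 2 * ‖C‖), hsq,
      mul_nonneg hsD.le hs.le, norm_nonneg K']
  have hprod : ‖K‖ * ‖K'‖ < 1 := by
    nlinarith [mul_le_mul hKa hK'a (by positivity) (by positivity), hsq,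
      mul_pos hδ hsD, mul_pos hsD hsD, norm_nonneg K, norm_nonneg K']
  -- invertibility of 1 - K' ∘L K
  have hKKnorm : ‖K' ∘L K‖ < 1 :=
    lt_of_le_of_lt (ContinuousLinearMap.opNorm_comp_le _ _)
      (by rwa [mul_comm] at hprod)
  set e := WithLp.equiv 2 (H0 × H1) with hedef
  -- pointwise Riccati identities
  have hKpt : ∀ x0 : H0, K (A0 x0) - A1 (K x0) + K (B (K x0)) = C x0 := by
    intro x0
    have h := ContinuousLinearMap.ext_iff.mp hKeq x0
    simpa using h
  have hK'pt : ∀ x1 : H1, K' (A1 x1) - A0 (K' x1) + K' (C (K' x1)) = B x1 := by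
    intro x1
    have h := ContinuousLinearMap.ext_iff.mp hK'eq x1
    simpa using h
  set u1 : (H0 →L[ℂ] H0)ˣ := Units.oneSub (K' ∘L K) hKKnorm with hu1def
  have hu1val : (u1 : H0 →L[ℂ] H0) = 1 - K' ∘L K := rfl
  refine ⟨K, K', hg1, hKeq, hg2, hK'eq, hprod, ?_, ?_, ?_, ?_⟩
  · -- invariance of G(K)
    rintro u ⟨x0, rfl⟩
    rw [hL]
    refine ⟨A0 x0 + B (K x0), ?_⟩
    have h : C x0 + A1 (K x0) = K (A0 x0 + B (K x0)) := by
      rw [map_add, ← hKpt x0]; abel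
    rw [h]
  · -- invariance of G'(K')
    rintro u ⟨x1, rfl⟩
    rw [hL]
    refine ⟨C (K' x1) + A1 x1, ?_⟩
    have h : A0 (K' x1) + B x1 = K' (C (K' x1) + A1 x1) := by
      rw [map_add, ← hK'pt x1]; abel
    rw [h]
  · -- trivial intersection
    ext x
    simp only [Set.mem_inter_iff, Set.mem_setOf_eq, Set.mem_singleton_iff]
    constructor
    · rintro ⟨⟨x0, hx0⟩, ⟨x1, hx1⟩⟩
      have h2 : (x0, K x0) = (K' x1, x1) := e.symm.injective (hx0.symm.trans hx1)
      have h3 : x0 = K' x1 := congrArg Prod.fst h2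
      have h4 : K x0 = x1 := congrArg Prod.snd h2
      have h5 : (1 - K' ∘L K) x0 = 0 := by
        simp only [ContinuousLinearMap.sub_apply, ContinuousLinearMap.one_apply,
          ContinuousLinearMap.coe_comp', Function.comp_apply]
        rw [h4, ← h3, sub_self]
      have hx0z : x0 = 0 := by
        calc x0 = ((↑u1⁻¹ * ↑u1 : H0 →L[ℂ] H0)) x0 := by rw [u1.inv_mul]; simp
          _ = (↑u1⁻¹ : H0 →L[ℂ] H0) ((↑u1 : H0 →L[ℂ] H0) x0) := by
              rw [ContinuousLinearMap.mul_apply]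
          _ = 0 := by rw [hu1val, h5, map_zero]
      have hx1z : x1 = 0 := by rw [← h4, hx0z, map_zero]
      rw [hx0, hx0z, map_zero]
      simp [hedef]
    · rintro rfl
      constructor
      · exact ⟨0, by simp [hedef]; rfl⟩
      · exact ⟨0, by simp [hedef]; rfl⟩
  · -- spanning
    intro x
    obtain ⟨⟨y0, y1⟩, rfl⟩ : ∃ p : H0 × H1, x = e.symm p := ⟨e x, (e.symm_apply_apply x).symm⟩
    set x0 : H0 := (↑u1⁻¹ : H0 →L[ℂ] H0) (y0 - K' y1) with hx0def
    set x1 : H1 := y1 - K x0 with hx1def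
    refine ⟨e.symm (x0, K x0), ⟨x0, rfl⟩, e.symm (K' x1, x1), ⟨x1, rfl⟩, ?_⟩
    have hadd : e.symm (x0, K x0) + e.symm (K' x1, x1) = e.symm (x0 + K' x1, K x0 + x1) := by
      rw [hedef]
      rfl
    rw [hadd]
    congr 1
    have hinv : (1 - K' ∘L K) x0 = y0 - K' y1 := by
      calc (1 - K' ∘L K) x0 = ((↑u1 * ↑u1⁻¹ : H0 →L[ℂ] H0)) (y0 - K' y1) := by
            rw [ContinuousLinearMap.mul_apply, ← hu1val, hx0def]
        _ = y0 - K' y1 := by rw [u1.mul_inv]; simp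
    have h6 : x0 - K' (K x0) = y0 - K' y1 := by
      simpa only [ContinuousLinearMap.sub_apply, ContinuousLinearMap.one_apply,
        ContinuousLinearMap.coe_comp', Function.comp_apply] using hinv
    have hfst : y0 = x0 + K' x1 := by
      rw [hx1def, map_sub]
      calc y0 = (y0 - K' y1) + K' y1 := by abel
        _ = (x0 - K' (K x0)) + K' y1 := by rw [h6]
        _ = x0 + (K' y1 - K' (K x0)) := by abel
    have hsnd : y1 = K x0 + x1 := by rw [hx1def]; abel
    exact Prod.ext hfst hsnd
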